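/- Let f be a linear map on symmetric p×p real matrices satisfying f(C S C) = C f(S) C for every positive diagonal matrix C and every symmetric S. Then there exists a symmetric matrix A such that f(S) = A ⊙ S (entrywise Hadamard product) for all symmetric S. -/

import Mathlib

open Matrix

namespace SchurAuxProof

variable {p : ℕ}

/-- symmetrized elementary matrix -/
def E (i j : Fin p) : Matrix (Fin p) (Fin p) ℝ :=
  Matrix.single i j 1 + Matrix.single j i 1

lemma E_apply (i j k l : Fin p) :
    E i j k l = (if i = k ∧ j = l then (1:ℝ) else 0) + (if j = k ∧ i = l then 1 else 0) := by
  simp [E, Matrix.single]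

lemma E_comm (i j : Fin p) : E j i = E i j := add_comm _ _

lemma E_isSymm (i j : Fin p) : (E i j).IsSymm := by
  ext k l
  simp only [transpose_apply, E_apply]
  rw [add_comm]
  exact congrArg₂ (· + ·) (if_congr and_comm rfl rfl) (if_congr and_comm rfl rfl)

lemma sum_smul_E (T : Matrix (Fin p) (Fin p) ℝ) (hT : T.IsSymm) :
    ∑ i, ∑ j, T i j • E i j = (2:ℝ) • T := by
  ext k l
  simp only [Matrix.sum_apply, Matrix.smul_apply, E_apply, smul_eq_mul, mul_add,
    mul_ite, mul_one, mul_zero, Finset.sum_add_distrib, ite_and, smul_eq_mul]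
  rw [two_mul]
  congr 1
  · rw [Finset.sum_comm]
    simp [Finset.sum_ite_eq']
  · simp [Finset.sum_ite_eq', hT.apply k l]

lemma conj_E (c : Fin p → ℝ) (i j : Fin p) :
    diagonal c * E i j * diagonal c = (c i * c j) • E i j := by
  ext k l
  rw [Matrix.mul_diagonal, Matrix.diagonal_mul, Matrix.smul_apply, E_apply, smul_eq_mul]
  split_ifs with h1 h2 h2 <;>
    first
      | (obtain ⟨rfl, rfl⟩ := h1; ring)
      | (obtain ⟨rfl, rfl⟩ := h2; ring)
      | ring

end SchurAuxProof

open SchurAuxProof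

/-- A linear map on symmetric p×p real matrices that is equivariant under
congruence by positive diagonal matrices, f(C S C) = C f(S) C, is a Schur
(Hadamard) multiplier: f(S) = A ⊙ S for some fixed symmetric A. -/
theorem diagonal_equivariant_linear_is_schur (p : ℕ)
    (f : Matrix (Fin p) (Fin p) ℝ →ₗ[ℝ] Matrix (Fin p) (Fin p) ℝ)
    (hsymm : ∀ S : Matrix (Fin p) (Fin p) ℝ, S.IsSymm → (f S).IsSymm)
    (hequiv : ∀ (c : Fin p → ℝ), (∀ i, 0 < c i) →
      ∀ S : Matrix (Fin p) (Fin p) ℝ, S.IsSymm →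
        f (Matrix.diagonal c * S * Matrix.diagonal c) =
          Matrix.diagonal c * f S * Matrix.diagonal c) :
    ∃ A : Matrix (Fin p) (Fin p) ℝ, A.IsSymm ∧
      ∀ S : Matrix (Fin p) (Fin p) ℝ, S.IsSymm → f S = Matrix.hadamard A S := by
  -- the scalar equivariance relation on basis elements
  have hconj : ∀ (c : Fin p → ℝ), (∀ i, 0 < c i) → ∀ i j k l : Fin p,
      (c i * c j) * f (E i j) k l = c k * f (E i j) k l * c l := by
    intro c hc i j k l
    have h := hequiv c hc (E i j) (E_isSymm i j)
    rw [conj_E, LinearMap.map_smul] at h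
    have h2 := congrFun (congrFun h k) l
    simpa [Matrix.mul_diagonal, Matrix.diagonal_mul, Matrix.smul_apply, smul_eq_mul] using h2
  -- f (E i j) vanishes outside the positions (i,j) and (j,i)
  have hker : ∀ i j k l : Fin p, ¬((k = i ∧ l = j) ∨ (k = j ∧ l = i)) →
      f (E i j) k l = 0 := by
    intro i j k l h
    push_neg at h
    by_cases hki : k = i
    · subst hki
      have hlj : l ≠ j := h.1 rfl
      have heq := hconj (fun m => if m = l then 2 else 1)
        (by intro m; split <;> norm_num) k j k l
      set M := f (E k j) k l with hM
      by_cases hkl : k = l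
      · simp [hkl, Ne.symm hlj] at heq; linarith
      · simp [hkl, Ne.symm hlj] at heq; linarith
    · by_cases hkj : k = j
      · subst hkj
        have hli : l ≠ i := h.2 rfl
        have heq := hconj (fun m => if m = l then 2 else 1)
          (by intro m; split <;> norm_num) i k k l
        set M := f (E i k) k l with hM
        by_cases hkl : k = l
        · simp [hkl, Ne.symm hli] at heq; linarith
        · simp [hkl, Ne.symm hli] at heq; linarith
      · have heq := hconj (fun m => if m = k then 2 else 1)
          (by intro m; split <;> norm_num) i j k l
        set M := f (E i j) k l with hM
        by_cases hlk : l = k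
        · simp [hlk, Ne.symm hki, Ne.symm hkj] at heq; linarith
        · simp [hlk, Ne.symm hki, Ne.symm hkj] at heq; linarith
  -- the Schur multiplier matrix
  set A : Matrix (Fin p) (Fin p) ℝ :=
    Matrix.of (fun i j => if i = j then f (E i j) i j / 2 else f (E i j) i j) with hA
  have hAapp : ∀ i j, A i j = if i = j then f (E i j) i j / 2 else f (E i j) i j := by
    intro i j; rw [hA]; rfl
  have hAsymm : A.IsSymm := by
    ext i j
    rw [Matrix.transpose_apply, hAapp, hAapp]
    by_cases hij : i = j
    · subst hij; rfl
    · rw [if_neg hij, if_neg (Ne.symm hij), E_comm,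
        (hsymm (E i j) (E_isSymm i j)).apply i j]
  -- f on basis elements
  have hfE : ∀ i j : Fin p, f (E i j) = A i j • E i j := by
    intro i j
    ext k l
    rw [Matrix.smul_apply, E_apply, smul_eq_mul]
    by_cases h : (k = i ∧ l = j) ∨ (k = j ∧ l = i)
    · rcases h with ⟨rfl, rfl⟩ | ⟨rfl, rfl⟩
      · -- here i := k, j := l
        rw [hAapp]
        by_cases hkl : k = l
        · subst hkl
          norm_num
        · rw [if_neg hkl, if_pos (⟨rfl, rfl⟩ : k = k ∧ l = l),
            if_neg (fun hh : l = k ∧ k = l => hkl hh.2)]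
          ring
      · -- here j := k, i := l
        rw [hAapp]
        have hfs := (hsymm (E l k) (E_isSymm l k)).apply k l
        by_cases hlk : l = k
        · subst hlk
          norm_num
        · rw [if_neg hlk, if_neg (fun hh : l = k ∧ k = l => hlk hh.1),
            if_pos (⟨rfl, rfl⟩ : k = k ∧ l = l), ← hfs]
          ring
    · rw [hker i j k l h]
      push_neg at h
      rw [if_neg (fun hh : i = k ∧ j = l => (h.1 hh.1.symm) hh.2.symm),
        if_neg (fun hh : j = k ∧ i = l => (h.2 hh.1.symm) hh.2.symm)]
      ring
  refine ⟨A, hAsymm, ?_⟩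
  intro S hS
  have hhad : (Matrix.hadamard A S).IsSymm := by
    ext i j
    rw [Matrix.transpose_apply, Matrix.hadamard_apply, Matrix.hadamard_apply,
      hAsymm.apply i j, hS.apply i j]
  have key : (2:ℝ) • f S = (2:ℝ) • Matrix.hadamard A S := by
    calc (2:ℝ) • f S = f ((2:ℝ) • S) := (LinearMap.map_smul f 2 S).symm
      _ = f (∑ i, ∑ j, S i j • E i j) := by rw [sum_smul_E S hS]
      _ = ∑ i, ∑ j, S i j • f (E i j) := by
          rw [map_sum]
          exact Finset.sum_congr rfl fun i _ => by
            rw [map_sum]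
            exact Finset.sum_congr rfl fun j _ => LinearMap.map_smul f _ _
      _ = ∑ i, ∑ j, (Matrix.hadamard A S) i j • E i j := by
          refine Finset.sum_congr rfl fun i _ => Finset.sum_congr rfl fun j _ => ?_
          rw [hfE i j, smul_smul, Matrix.hadamard_apply, mul_comm]
      _ = (2:ℝ) • Matrix.hadamard A S := sum_smul_E _ hhad
  exact smul_right_injective (Matrix (Fin p) (Fin p) ℝ) two_ne_zero key
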